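/- arXiv:1105.4665 — 5 statements merged into one kernel-verified Lean document; each statement's English description precedes it below -/
import Mathlib

section
/- Contrapositive of the main lemma: if the CSP induced by the LP beliefs contains a frustrated subgraph (a subcollection of cliques with no common satisfying assignment), then the LP solution cannot be fully integral, i.e., there exists some clique c and configuration x_c with 0 < b_c(x_c) < 1. -/
/-- Contrapositive of the main lemma: if the CSP induced by the LP beliefs (nonnegative,
normalized, pairwise-marginalization-consistent) contains a frustrated subgraph, i.e. a
subcollection of cliques admitting no common satisfying assignment (an assignment whose
restriction to each clique has positive belief), then the LP solution cannot be fully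
integral: some clique has a configuration with strictly fractional belief. -/
theorem frustrated_subgraph_implies_fractional
    (n : ℕ) (ι : Type) [Fintype ι]
    (C : ι → Finset (Fin n))
    (b : ∀ j : ι, ({v // v ∈ C j} → Bool) → ℝ)
    (hnn : ∀ j : ι, ∀ u : {v // v ∈ C j} → Bool, 0 ≤ b j u)
    (hsum : ∀ j : ι, (∑ u : {v // v ∈ C j} → Bool, b j u) = 1)
    (hcons : ∀ j k : ι, ∀ x : Fin n → Bool,
      (∑ u ∈ Finset.univ.filter
          (fun u : {v // v ∈ C j} → Bool =>
            ∀ i : {v // v ∈ C j}, i.val ∈ C k → u i = x i.val), b j u) =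
      (∑ u ∈ Finset.univ.filter
          (fun u : {v // v ∈ C k} → Bool =>
            ∀ i : {v // v ∈ C k}, i.val ∈ C j → u i = x i.val), b k u))
    (S : Finset ι)
    (hfrustrated : ¬ ∃ x : Fin n → Bool, ∀ j ∈ S,
      0 < b j (fun i : {v // v ∈ C j} => x i.val)) :
    ∃ (j : ι) (u : {v // v ∈ C j} → Bool), 0 < b j u ∧ b j u < 1 := by
  by_contra h
  push_neg at h
  -- every belief value is ≤ 1
  have hle1 : ∀ j (u : {v // v ∈ C j} → Bool), b j u ≤ 1 := by
    intro j u
    calc b j u ≤ ∑ u : {v // v ∈ C j} → Bool, b j u :=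
          Finset.single_le_sum (fun u _ => hnn j u) (Finset.mem_univ u)
      _ = 1 := hsum j
  -- every positive belief equals 1
  have hone : ∀ j (u : {v // v ∈ C j} → Bool), 0 < b j u → b j u = 1 :=
    fun j u hu => le_antisymm (hle1 j u) (h j u hu)
  -- existence of a configuration with belief 1
  have hex : ∀ j, ∃ u : {v // v ∈ C j} → Bool, b j u = 1 := by
    intro j
    by_contra hc
    push_neg at hc
    have : (∑ u : {v // v ∈ C j} → Bool, b j u) = 0 := by
      apply Finset.sum_eq_zero
      intro u _
      rcases lt_or_eq_of_le (hnn j u) with hp | hp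
      · exact absurd (hone j u hp) (hc u)
      · exact hp.symm
    rw [hsum j] at this; norm_num at this
  -- uniqueness
  have huniq : ∀ j (u u' : {v // v ∈ C j} → Bool), b j u = 1 → b j u' = 1 → u = u' := by
    intro j u u' hu hu'
    by_contra hne
    have hsub : ({u, u'} : Finset _) ⊆ Finset.univ := Finset.subset_univ _
    have h2 : (2 : ℝ) ≤ ∑ w : {v // v ∈ C j} → Bool, b j w := by
      calc (2 : ℝ) = b j u + b j u' := by rw [hu, hu']; norm_num
        _ = ∑ w ∈ ({u, u'} : Finset _), b j w := (Finset.sum_pair hne).symm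
        _ ≤ ∑ w : {v // v ∈ C j} → Bool, b j w :=
            Finset.sum_le_sum_of_subset_of_nonneg hsub (fun w _ _ => hnn j w)
    rw [hsum j] at h2; norm_num at h2
  set U : ∀ j, {v // v ∈ C j} → Bool := fun j => Classical.choose (hex j) with hU
  have hU1 : ∀ j, b j (U j) = 1 := fun j => Classical.choose_spec (hex j)
  -- agreement on intersections
  have hagree : ∀ j k (i : Fin n) (hi : i ∈ C j) (hk : i ∈ C k),
      U j ⟨i, hi⟩ = U k ⟨i, hk⟩ := by
    intro j k i hi hk
    set x : Fin n → Bool := fun i => if h : i ∈ C j then U j ⟨i, h⟩ else false with hx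
    have hmem : U j ∈ Finset.univ.filter
        (fun u : {v // v ∈ C j} → Bool =>
          ∀ i' : {v // v ∈ C j}, i'.val ∈ C k → u i' = x i'.val) := by
      simp only [Finset.mem_filter, Finset.mem_univ, true_and]
      intro i' _
      simp [hx, i'.property]
    have hL : (1 : ℝ) ≤ ∑ u ∈ Finset.univ.filter
        (fun u : {v // v ∈ C j} → Bool =>
          ∀ i' : {v // v ∈ C j}, i'.val ∈ C k → u i' = x i'.val), b j u := by
      calc (1 : ℝ) = b j (U j) := (hU1 j).symm
        _ ≤ _ := Finset.single_le_sum (fun u _ => hnn j u) hmem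
    rw [hcons j k x] at hL
    have hR : ∃ u ∈ Finset.univ.filter
        (fun u : {v // v ∈ C k} → Bool =>
          ∀ i' : {v // v ∈ C k}, i'.val ∈ C j → u i' = x i'.val), 0 < b k u := by
      by_contra hc
      push_neg at hc
      have : (∑ u ∈ Finset.univ.filter
          (fun u : {v // v ∈ C k} → Bool =>
            ∀ i' : {v // v ∈ C k}, i'.val ∈ C j → u i' = x i'.val), b k u) = 0 :=
        Finset.sum_eq_zero (fun u hu => le_antisymm (hc u hu) (hnn k u))
      rw [this] at hL; norm_num at hL
    obtain ⟨u, hu, hupos⟩ := hR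
    have hu1 : b k u = 1 := hone k u hupos
    have hueq : u = U k := huniq k u (U k) hu1 (hU1 k)
    simp only [Finset.mem_filter, Finset.mem_univ, true_and] at hu
    have := hu ⟨i, hk⟩ hi
    rw [hueq] at this
    rw [this]
    simp [hx, hi]
  -- global assignment
  apply hfrustrated
  classical
  refine ⟨fun i => if h : ∃ j, i ∈ C j then U (Classical.choose h) ⟨i, Classical.choose_spec h⟩ else false, ?_⟩
  intro j _
  have : (fun i : {v // v ∈ C j} =>
      if h : ∃ k, i.val ∈ C k then U (Classical.choose h) ⟨i.val, Classical.choose_spec h⟩ else false) = U j := by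
    funext i
    have hex' : ∃ k, i.val ∈ C k := ⟨j, i.property⟩
    simp only [dif_pos hex']
    exact hagree (Classical.choose hex') j i.val (Classical.choose_spec hex') i.property
  rw [this, hU1 j]
  norm_num
end

section
/- A 2-SAT instance (conjunction of clauses each involving at most 2 literals) is satisfiable if and only if its implication graph contains no variable x such that the literals x and ¬x lie in the same strongly connected component. -/
/-- A literal over `n` boolean variables: `(v, s)` asserts that variable `v` takes
value `s`. -/
abbrev Lit (n : ℕ) := Fin n × Bool

/-- Negation of a literal. -/
def negLit {n : ℕ} (l : Lit n) : Lit n := (l.1, !l.2)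

/-- A literal holds under an assignment. -/
def evalLit {n : ℕ} (a : Fin n → Bool) (l : Lit n) : Prop := a l.1 = l.2

/-- The implication graph of a 2-SAT formula `F` (a finite set of clauses, each a
disjunction of two literals): each clause `(l₁ ∨ l₂)` contributes the directed edges
`¬l₁ → l₂` and `¬l₂ → l₁`. -/
def ImpEdge {n : ℕ} (F : Finset (Lit n × Lit n)) (l l' : Lit n) : Prop :=
  ∃ cl ∈ F, (l = negLit cl.1 ∧ l' = cl.2) ∨ (l = negLit cl.2 ∧ l' = cl.1)

lemma evalLit_negLit {n} (a : Fin n → Bool) (l : Lit n) :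
    evalLit a (negLit l) ↔ ¬ evalLit a l := by
  cases h : a l.1 <;> cases l.2 <;> simp [evalLit, negLit, h]

lemma negLit_negLit {n} (l : Lit n) : negLit (negLit l) = l := by
  simp [negLit]

lemma edge_sound {n} {F : Finset (Lit n × Lit n)} {a : Fin n → Bool}
    (hF : ∀ cl ∈ F, evalLit a cl.1 ∨ evalLit a cl.2) {l l' : Lit n}
    (h : ImpEdge F l l') (hl : evalLit a l) : evalLit a l' := by
  obtain ⟨cl, hcl, ⟨h1, h2⟩ | ⟨h1, h2⟩⟩ := h <;> subst h1 <;> subst h2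
  · rcases hF cl hcl with h | h
    · exact absurd h ((evalLit_negLit a cl.1).mp hl)
    · exact h
  · rcases hF cl hcl with h | h
    · exact h
    · exact absurd h ((evalLit_negLit a cl.2).mp hl)

lemma reach_sound {n} {F : Finset (Lit n × Lit n)} {a : Fin n → Bool}
    (hF : ∀ cl ∈ F, evalLit a cl.1 ∨ evalLit a cl.2) {l l' : Lit n}
    (h : Relation.ReflTransGen (ImpEdge F) l l') (hl : evalLit a l) : evalLit a l' := by
  induction h with
  | refl => exact hl
  | tail _ e ih => exact edge_sound hF e ih

def LitP {n : ℕ} (_ : Finset (Lit n × Lit n)) := Lit n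

instance {n} (F : Finset (Lit n × Lit n)) : Preorder (LitP F) where
  le l l' := Relation.ReflTransGen (ImpEdge F) l l'
  le_refl _ := .refl
  le_trans _ _ _ h h' := Relation.ReflTransGen.trans h h'

lemma le_of_reach {n} {F : Finset (Lit n × Lit n)} {l l' : Lit n}
    (h : Relation.ReflTransGen (ImpEdge F) l l') :
    @LE.le (LitP F) Preorder.toLE l l' := h

noncomputable def phi {n} (F : Finset (Lit n × Lit n)) :
    LitP F → LinearExtension (Antisymmetrization (LitP F) (· ≤ ·)) :=
  fun l => toLinearExtension (@toAntisymmetrization (LitP F) (· ≤ ·) _ l)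

lemma phi_mono {n} {F : Finset (Lit n × Lit n)} {l l' : Lit n}
    (h : Relation.ReflTransGen (ImpEdge F) l l') :
    phi F l ≤ phi F l' :=
  toLinearExtension.monotone (toAntisymmetrization_mono (le_of_reach h))

lemma phi_eq {n} {F : Finset (Lit n × Lit n)} {l l' : Lit n}
    (h : phi F l = phi F l') :
    Relation.ReflTransGen (ImpEdge F) l l' ∧ Relation.ReflTransGen (ImpEdge F) l' l := by
  have h2 : @toAntisymmetrization (LitP F) (· ≤ ·) _ l
      = @toAntisymmetrization (LitP F) (· ≤ ·) _ l' := h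
  have h3 : @AntisymmRel (LitP F) (· ≤ ·) l l' :=
    @Quotient.exact' (LitP F) (AntisymmRel.setoid (LitP F) (· ≤ ·)) _ _ h2
  exact ⟨h3.1, h3.2⟩

/-- A 2-SAT instance is satisfiable if and only if its implication graph contains no
variable `v` whose two literals lie in the same strongly connected component, i.e. such
that `(v, true)` and `(v, false)` are mutually reachable. -/
theorem twoSat_satisfiable_iff_no_contradictory_scc {n : ℕ}
    (F : Finset (Lit n × Lit n)) :
    (∃ a : Fin n → Bool, ∀ cl ∈ F, evalLit a cl.1 ∨ evalLit a cl.2) ↔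
      ∀ v : Fin n,
        ¬ (Relation.ReflTransGen (ImpEdge F) (v, true) (v, false) ∧
           Relation.ReflTransGen (ImpEdge F) (v, false) (v, true)) := by
  constructor
  · rintro ⟨a, ha⟩ v ⟨h1, h2⟩
    cases hv : a v with
    | true =>
      have : evalLit a (v, false) := reach_sound ha h1 hv
      simp [evalLit, hv] at this
    | false =>
      have : evalLit a (v, true) := reach_sound ha h2 hv
      simp [evalLit, hv] at this
  · intro hv
    -- no contradictory literal
    have hne : ∀ l : Lit n, phi F l ≠ phi F (negLit l) := by
      rintro ⟨v, s⟩ h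
      have := phi_eq h
      cases s with
      | true => exact hv v ⟨this.1, this.2⟩
      | false => exact hv v ⟨this.2, this.1⟩
    classical
    refine ⟨fun v => decide (phi F (v, false) < phi F (v, true)), ?_⟩
    have heval : ∀ l : Lit n,
        evalLit (fun v => decide (phi F (v, false) < phi F (v, true))) l ↔
          phi F (negLit l) < phi F l := by
      rintro ⟨v, s⟩
      cases s with
      | true => simp [evalLit, negLit]
      | false =>
        simp only [evalLit, negLit, Bool.not_false, decide_eq_false_iff_not, not_lt]
        constructor
        · intro h; exact lt_of_le_of_ne h (hne (v, true))
        · exact le_of_lt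
    rintro cl hcl
    by_contra hc
    push_neg at hc
    obtain ⟨hc1, hc2⟩ := hc
    rw [heval] at hc1 hc2
    have e1 : phi F (negLit cl.1) ≤ phi F cl.2 :=
      phi_mono (Relation.ReflTransGen.single ⟨cl, hcl, Or.inl ⟨rfl, rfl⟩⟩)
    have e2 : phi F (negLit cl.2) ≤ phi F cl.1 :=
      phi_mono (Relation.ReflTransGen.single ⟨cl, hcl, Or.inr ⟨rfl, rfl⟩⟩)
    have h1 : phi F cl.1 ≤ phi F (negLit cl.1) := not_lt.mp hc1
    have h2 : phi F cl.2 ≤ phi F (negLit cl.2) := not_lt.mp hc2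
    exact hne cl.1 (le_antisymm h1 (e1.trans (h2.trans e2)))
end

section
/- If a joint probability distribution p on {0,1}^n has marginals matching the pairwise beliefs, and the implication graph contains a directed path from node (x_i = 1) to node (x_i = 0), then the marginal of p satisfies p(x_i = 1) = 0. -/
/-- If a joint probability distribution `p` on `{0,1}ⁿ` has marginals matching the
pairwise beliefs, so that every implication edge `(x_j = a) → (x_k = c)` is valid for
`p` (every configuration in the support of `p` with `x_j = a` has `x_k = c`), and the
implication graph contains a directed path from the node `(x_i = 1)` to the node
`(x_i = 0)`, then the marginal of `p` satisfies `p(x_i = 1) = 0`. -/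
theorem path_forces_zero_marginal {n : ℕ}
    (E : (Fin n × Bool) → (Fin n × Bool) → Prop)
    (p : (Fin n → Bool) → ℝ)
    (hnn : ∀ x, 0 ≤ p x)
    (hvalid : ∀ (j k : Fin n) (a c : Bool), E (j, a) (k, c) →
      ∀ x : Fin n → Bool, 0 < p x → x j = a → x k = c)
    (i : Fin n)
    (hpath : Relation.ReflTransGen E (i, true) (i, false)) :
    (∑ x ∈ Finset.univ.filter (fun x : Fin n → Bool => x i = true), p x) = 0 := by
  apply Finset.sum_eq_zero
  intro x hx
  simp only [Finset.mem_filter] at hx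
  by_contra hne
  have hpos : 0 < p x := lt_of_le_of_ne (hnn x) (Ne.symm hne)
  have key : ∀ u v : Fin n × Bool, Relation.ReflTransGen E u v →
      x u.1 = u.2 → x v.1 = v.2 := by
    intro u v h
    induction h with
    | refl => exact id
    | tail _ hE ih =>
      intro hu
      exact hvalid _ _ _ _ hE x hpos (ih hu)
  have := key (i, true) (i, false) hpath hx.2
  simp [hx.2] at this
end

section
/- Local consistency on a tree implies global consistency: if cliques of a CSP over binary variables form a tree structure (junction tree, i.e., satisfying the running intersection property) and beliefs on the cliques agree on all pairwise separator marginals, then there is a global joint distribution whose clique marginals equal the given beliefs; consequently the CSP induced by the supports of these beliefs is not frustrated. -/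
namespace TLCAux

open Finset

variable {n : ℕ}

/-- The set of assignments agreeing with `x` on `A`. -/
def F (A : Finset (Fin n)) (x : Fin n → Bool) : Finset (Fin n → Bool) :=
  Finset.univ.filter (fun y => ∀ i ∈ A, y i = x i)

lemma mem_F {A : Finset (Fin n)} {x y : Fin n → Bool} :
    y ∈ F A x ↔ ∀ i ∈ A, y i = x i := by simp [F]

lemma self_mem_F {A : Finset (Fin n)} {x : Fin n → Bool} : x ∈ F A x := by simp [F]

/-- Marginal of `p` on `A` evaluated at `x`. -/
def marg (A : Finset (Fin n)) (p : (Fin n → Bool) → ℝ) (x : Fin n → Bool) : ℝ :=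
  ∑ y ∈ F A x, p y

lemma card_F (A : Finset (Fin n)) (x : Fin n → Bool) :
    (F A x).card = 2 ^ (Aᶜ.card) := by
  classical
  rw [show (2 : ℕ) ^ (Aᶜ.card) = Fintype.card ({ i // i ∈ Aᶜ } → Bool) by
    rw [Fintype.card_fun, Fintype.card_bool, Fintype.card_coe]]
  rw [← Finset.card_univ]
  apply Finset.card_bij' (fun y _ => fun i : {i // i ∈ Aᶜ} => y i.1)
    (fun g _ => fun i => if h : i ∈ A then x i else g ⟨i, by simpa using h⟩)
  case hi => intro y hy; exact Finset.mem_univ _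
  case hj =>
    intro g hg
    rw [mem_F]
    intro i hi
    simp [hi]
  case left_inv =>
    intro y hy
    rw [mem_F] at hy
    funext i
    by_cases h : i ∈ A
    · simp [h, hy i h]
    · simp [h]
  case right_inv =>
    intro g hg
    funext i
    have h2 := i.2
    rw [Finset.mem_compl] at h2
    simp [h2]

/-- `q` depends only on coordinates in `A`. -/
def DepOn (A : Finset (Fin n)) (q : (Fin n → Bool) → ℝ) : Prop :=
  ∀ ⦃x y : Fin n → Bool⦄, (∀ i ∈ A, y i = x i) → q y = q x

lemma marg_of_depOn {A : Finset (Fin n)} {p : (Fin n → Bool) → ℝ}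
    (h : DepOn A p) (x : Fin n → Bool) :
    marg A p x = (2:ℝ) ^ (Aᶜ.card) * p x := by
  unfold marg
  rw [Finset.sum_congr rfl (fun y hy => h (mem_F.mp hy)), Finset.sum_const, card_F,
    nsmul_eq_mul]
  push_cast
  ring

lemma tower {A B : Finset (Fin n)} (hAB : A ⊆ B) (p : (Fin n → Bool) → ℝ)
    (x : Fin n → Bool) :
    (2:ℝ) ^ (Bᶜ.card) * marg A p x = ∑ y ∈ F A x, marg B p y := by
  classical
  have step1 : ∑ y ∈ F A x, marg B p y
      = ∑ y ∈ F A x, ∑ z : Fin n → Bool, if (∀ i ∈ B, z i = y i) then p z else 0 := by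
    refine Finset.sum_congr rfl fun y _ => ?_
    rw [marg, F, Finset.sum_filter]
  rw [step1, Finset.sum_comm]
  have step2 : ∀ z : Fin n → Bool,
      (∑ y ∈ F A x, if (∀ i ∈ B, z i = y i) then p z else 0)
      = if z ∈ F A x then (2:ℝ) ^ (Bᶜ.card) * p z else 0 := by
    intro z
    rw [← Finset.sum_filter]
    by_cases hz : z ∈ F A x
    · rw [if_pos hz]
      have hset : (F A x).filter (fun y => ∀ i ∈ B, z i = y i) = F B z := by
        ext y
        rw [Finset.mem_filter, mem_F]
        constructor
        · rintro ⟨h1, h2⟩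
          exact mem_F.mpr fun i hi => (h2 i hi).symm
        · intro h
          refine ⟨fun i hi => ?_, fun i hi => ((mem_F.mp h) i hi).symm⟩
          rw [(mem_F.mp h) i (hAB hi)]
          exact (mem_F.mp hz) i hi
      rw [hset, Finset.sum_const, card_F, nsmul_eq_mul]
      push_cast
      ring
    · rw [if_neg hz]
      apply Finset.sum_eq_zero
      intro y hy
      rw [Finset.mem_filter] at hy
      exact absurd (mem_F.mpr (fun i hi => by
        rw [(hy.2 i (hAB hi))]
        exact (mem_F.mp hy.1) i hi)) hz
  rw [Finset.sum_congr rfl (fun z _ => step2 z), Finset.sum_ite_mem,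
    Finset.univ_inter, marg, Finset.mul_sum]

lemma sum_marg (A : Finset (Fin n)) (p : (Fin n → Bool) → ℝ) :
    ∑ x, marg A p x = (2:ℝ) ^ (Aᶜ.card) * ∑ y, p y := by
  classical
  have step1 : ∀ x : Fin n → Bool, marg A p x
      = ∑ y : Fin n → Bool, if (∀ i ∈ A, y i = x i) then p y else 0 := by
    intro x; rw [marg, F, Finset.sum_filter]
  rw [Finset.sum_congr rfl (fun x _ => step1 x), Finset.sum_comm, Finset.mul_sum]
  refine Finset.sum_congr rfl fun y _ => ?_
  rw [← Finset.sum_filter]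
  have hset : Finset.univ.filter (fun x : Fin n → Bool => ∀ i ∈ A, y i = x i) = F A y := by
    ext z
    simp [F, eq_comm]
  rw [hset, Finset.sum_const, card_F, nsmul_eq_mul]
  push_cast
  ring

lemma marg_congr_of_depOn {V' : Finset (Fin n)} {p : (Fin n → Bool) → ℝ}
    (h : DepOn V' p) (A : Finset (Fin n)) {x y : Fin n → Bool}
    (hxy : ∀ i ∈ A ∩ V', y i = x i) : marg A p y = marg A p x := by
  classical
  unfold marg
  apply Finset.sum_nbij' (i := fun z => fun i => if i ∈ A then x i else z i)
    (j := fun z => fun i => if i ∈ A then y i else z i)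
  case hi => intro z hz; rw [mem_F]; intro i hi; simp [hi]
  case hj => intro z hz; rw [mem_F]; intro i hi; simp [hi]
  case left_neg =>
    intro z hz
    funext i
    by_cases hi : i ∈ A
    · simp only [hi, if_pos]
      exact ((mem_F.mp hz) i hi).symm
    · simp [hi]
  case right_neg =>
    intro z hz
    funext i
    by_cases hi : i ∈ A
    · simp only [hi, if_pos]
      exact ((mem_F.mp hz) i hi).symm
    · simp [hi]
  case h =>
    intro z hz
    apply (h _).symm
    intro w hw
    by_cases hwA : w ∈ A
    · simp only [hwA, if_pos]
      rw [(mem_F.mp hz) w hwA]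
      exact (hxy w (Finset.mem_inter.mpr ⟨hwA, hw⟩)).symm
    · simp [hwA]

lemma marg_inter_of_depOn {V' : Finset (Fin n)} {p : (Fin n → Bool) → ℝ}
    (h : DepOn V' p) (A : Finset (Fin n)) (x : Fin n → Bool) :
    (2:ℝ) ^ (Aᶜ.card) * marg (A ∩ V') p x
      = (2:ℝ) ^ (((A ∩ V')ᶜ).card) * marg A p x := by
  rw [tower (Finset.inter_subset_left) p x]
  rw [Finset.sum_congr rfl (fun y hy => marg_congr_of_depOn h A
    (fun i hi => (mem_F.mp hy) i hi))]
  rw [Finset.sum_const, card_F, nsmul_eq_mul]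
  push_cast
  ring

section Clique

variable {c : Finset (Fin n)} {g : ({v // v ∈ c} → Bool) → ℝ}

/-- Lift a belief on a clique to a function of full assignments. -/
def lift (c : Finset (Fin n)) (g : ({v // v ∈ c} → Bool) → ℝ) : (Fin n → Bool) → ℝ :=
  fun x => g (fun i => x i.1)

/-- Marginal of a clique belief on `A` (evaluated at `x`). -/
def margb (c : Finset (Fin n)) (g : ({v // v ∈ c} → Bool) → ℝ)
    (A : Finset (Fin n)) (x : Fin n → Bool) : ℝ :=
  ∑ u ∈ Finset.univ.filter
      (fun u : {v // v ∈ c} → Bool => ∀ i : {v // v ∈ c}, i.1 ∈ A → u i = x i.1), g u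

lemma depOn_lift : DepOn c (lift c g) := by
  intro x y h
  unfold lift
  congr 1
  funext i
  exact h i.1 i.2

lemma margb_congr {A A' : Finset (Fin n)} {x x' : Fin n → Bool}
    (hA : ∀ i ∈ c, (i ∈ A ↔ i ∈ A')) (hx : ∀ i ∈ c, i ∈ A → x i = x' i) :
    margb c g A x = margb c g A' x' := by
  unfold margb
  refine Finset.sum_congr ?_ (fun _ _ => rfl)
  apply Finset.filter_congr
  intro u _
  constructor
  · intro h i hi
    rw [h i ((hA i.1 i.2).mpr hi)]
    exact hx i.1 i.2 ((hA i.1 i.2).mpr hi)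
  · intro h i hi
    rw [h i ((hA i.1 i.2).mp hi)]
    exact (hx i.1 i.2 hi).symm

lemma margb_nonneg (hg : ∀ u, 0 ≤ g u) (A : Finset (Fin n)) (x : Fin n → Bool) :
    0 ≤ margb c g A x :=
  Finset.sum_nonneg fun u _ => hg u

lemma lift_le_margb (hg : ∀ u, 0 ≤ g u) (A : Finset (Fin n)) (x : Fin n → Bool) :
    lift c g x ≤ margb c g A x := by
  unfold margb
  have hmem : (fun i : {v // v ∈ c} => x i.1) ∈ Finset.univ.filter
      (fun u : {v // v ∈ c} → Bool => ∀ i : {v // v ∈ c}, i.1 ∈ A → u i = x i.1) := by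
    simp
  exact Finset.single_le_sum (f := g) (fun u _ => hg u) hmem

lemma sum_lift_F (A : Finset (Fin n)) (x : Fin n → Bool) :
    ∑ y ∈ F A x, lift c g y = (2:ℝ) ^ (((c ∪ A)ᶜ).card) * margb c g A x := by
  classical
  set t := Finset.univ.filter
      (fun u : {v // v ∈ c} → Bool => ∀ i : {v // v ∈ c}, i.1 ∈ A → u i = x i.1) with ht
  have hmaps : ∀ y ∈ F A x, (fun i : {v // v ∈ c} => y i.1) ∈ t := by
    intro y hy
    rw [ht, Finset.mem_filter]
    exact ⟨Finset.mem_univ _, fun i hi => (mem_F.mp hy) i.1 hi⟩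
  rw [← Finset.sum_fiberwise_of_maps_to hmaps (lift c g)]
  rw [margb, Finset.mul_sum, ← ht]
  refine Finset.sum_congr rfl fun u hu => ?_
  have hcond : ∀ i : {v // v ∈ c}, i.1 ∈ A → u i = x i.1 := by
    rw [ht, Finset.mem_filter] at hu
    exact hu.2
  have hval : ∀ y ∈ (F A x).filter (fun y => (fun i : {v // v ∈ c} => y i.1) = u),
      lift c g y = g u := by
    intro y hy
    rw [Finset.mem_filter] at hy
    rw [lift, hy.2]
  rw [Finset.sum_congr rfl hval, Finset.sum_const]
  have hset : (F A x).filter (fun y => (fun i : {v // v ∈ c} => y i.1) = u)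
      = F (c ∪ A) (fun i => if h : i ∈ c then u ⟨i, h⟩ else x i) := by
    ext y
    rw [Finset.mem_filter, mem_F, mem_F]
    constructor
    · rintro ⟨h1, h2⟩ i hi
      by_cases hic : i ∈ c
      · rw [dif_pos hic]
        exact congrFun h2 ⟨i, hic⟩
      · rw [dif_neg hic]
        exact h1 i ((Finset.mem_union.mp hi).resolve_left hic)
    · intro h
      constructor
      · intro i hi
        by_cases hic : i ∈ c
        · rw [h i (Finset.mem_union_left _ hic), dif_pos hic]
          exact hcond ⟨i, hic⟩ hi
        · rw [h i (Finset.mem_union_right _ hi), dif_neg hic]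
      · funext i
        rw [h i.1 (Finset.mem_union_left _ i.2), dif_pos i.2]
  rw [hset, card_F, nsmul_eq_mul]
  push_cast
  ring

end Clique

lemma card_compl_add {A B : Finset (Fin n)} (hBA : B ⊆ A) :
    (Aᶜ).card + (A \ B).card = (Bᶜ).card := by
  classical
  rw [← Finset.card_union_of_disjoint (by
    rw [Finset.disjoint_left]
    intro a ha hb
    rw [Finset.mem_compl] at ha
    exact ha (Finset.mem_sdiff.mp hb).1)]
  congr 1
  ext i
  simp only [Finset.mem_union, Finset.mem_compl, Finset.mem_sdiff]
  constructor
  · rintro (h | ⟨h1, h2⟩)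
    · exact fun hi => h (hBA hi)
    · exact h2
  · intro h
    by_cases hA : i ∈ A
    · exact Or.inr ⟨hA, h⟩
    · exact Or.inl hA

section Graph

open SimpleGraph Walk

variable {ι : Type} {T : SimpleGraph ι}

lemma path_eq (hT : T.IsAcyclic) {u v : ι} {p q : T.Walk u v}
    (hp : p.IsPath) (hq : q.IsPath) : p = q :=
  Subtype.ext_iff.mp (SimpleGraph.isAcyclic_iff_path_unique.mp hT ⟨p, hp⟩ ⟨q, hq⟩)

lemma exists_leaf [Fintype ι] [DecidableEq ι] (hT : T.IsAcyclic) (s : Finset ι)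
    (hcard : 2 ≤ s.card)
    (hconn : ∀ j ∈ s, ∀ k ∈ s, ∃ w : T.Walk j k, ∀ l ∈ w.support, l ∈ s) :
    ∃ ℓ ∈ s, ∃ m₀ ∈ s, T.Adj ℓ m₀ ∧ (∀ a ∈ s, T.Adj ℓ a → a = m₀) ∧
      (∀ j ∈ s.erase ℓ, ∀ k ∈ s.erase ℓ,
        ∃ w : T.Walk j k, ∀ l ∈ w.support, l ∈ s.erase ℓ) := by
  classical
  set N := Fintype.card ι with hN
  set Q : ℕ → Prop := fun L => ∃ j k : ι, ∃ w : T.Walk j k,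
    w.IsPath ∧ (∀ l ∈ w.support, l ∈ s) ∧ w.length = L with hQ
  have hQbound : ∀ L, Q L → L < N := by
    rintro L ⟨j, k, w, hw, _, rfl⟩
    exact hw.length_lt
  -- a path of length ≥ 1 exists
  obtain ⟨a0, ha0, b0, hb0, hab⟩ := Finset.one_lt_card.mp (by omega : 1 < s.card)
  obtain ⟨w0, hw0⟩ := hconn a0 ha0 b0 hb0
  set P0 : T.Walk a0 b0 := (w0.toPath : T.Walk a0 b0) with hP0
  have hQ1 : Q P0.length :=
    ⟨a0, b0, P0, (w0.toPath).2, fun l hl => hw0 l (w0.support_toPath_subset hl), rfl⟩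
  have hlen1 : 1 ≤ P0.length := by
    by_contra h
    exact hab (Walk.eq_of_length_eq_zero (p := P0) (by omega))
  set L := Nat.findGreatest Q N with hL
  have hQL : Q L := Nat.findGreatest_spec (le_of_lt (hQbound _ hQ1)) hQ1
  have hL1 : 1 ≤ L := le_trans hlen1 (Nat.le_findGreatest (le_of_lt (hQbound _ hQ1)) hQ1)
  obtain ⟨ℓ, k, w, hw, hsupp, hlenw⟩ := hQL
  have hposw : 0 < w.length := by omega
  have hℓs : ℓ ∈ s := hsupp _ w.start_mem_support
  have hks : k ∈ s := hsupp _ w.end_mem_support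
  set m₀ := w.getVert 1 with hm₀
  have hadj : T.Adj ℓ m₀ := by
    have := w.adj_getVert_succ hposw
    rwa [w.getVert_zero] at this
  have hm₀s : m₀ ∈ s :=
    hsupp _ (Walk.mem_support_iff_exists_getVert.mpr ⟨1, rfl, by omega⟩)
  have huniq : ∀ a ∈ s, T.Adj ℓ a → a = m₀ := by
    intro a has hadja
    by_cases hmem : a ∈ w.support
    · have hwt : (w.takeUntil a hmem).IsPath := hw.takeUntil hmem
      have hw1 : (Walk.cons hadja Walk.nil : T.Walk ℓ a).IsPath := by
        rw [Walk.cons_isPath_iff]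
        refine ⟨Walk.IsPath.nil, ?_⟩
        simp [hadja.ne]
      have heq : w.takeUntil a hmem = Walk.cons hadja Walk.nil := path_eq hT hwt hw1
      have hspec := w.take_spec hmem
      rw [heq] at hspec
      rw [hm₀, ← hspec]
      simp [Walk.getVert_cons_succ, Walk.getVert_zero]
    · have hw2 : (Walk.cons hadja.symm w).IsPath := by
        rw [Walk.cons_isPath_iff]
        exact ⟨hw, hmem⟩
      have hQL1 : Q (L + 1) := by
        refine ⟨a, k, Walk.cons hadja.symm w, hw2, ?_, by simp [hlenw]⟩
        intro l hl
        rw [Walk.support_cons] at hl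
        rcases List.mem_cons.mp hl with h | h
        · exact h ▸ has
        · exact hsupp l h
      have := Nat.findGreatest_is_greatest (by omega : Nat.findGreatest Q N < L + 1)
        (by have := hQbound _ hQL1; omega)
      exact absurd hQL1 this
  refine ⟨ℓ, hℓs, m₀, hm₀s, hadj, huniq, ?_⟩
  intro j hj k' hk'
  have hjℓ : j ≠ ℓ := Finset.ne_of_mem_erase hj
  have hk'ℓ : k' ≠ ℓ := Finset.ne_of_mem_erase hk'
  obtain ⟨w0, hw0⟩ := hconn j (Finset.mem_of_mem_erase hj) k' (Finset.mem_of_mem_erase hk')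
  set q : T.Walk j k' := (w0.toPath : T.Walk j k') with hq
  have hqp : q.IsPath := (w0.toPath).2
  have hqsupp : ∀ l ∈ q.support, l ∈ s := fun l hl => hw0 l (w0.support_toPath_subset hl)
  have hns : ℓ ∉ q.support := by
    intro hℓmem
    set t := q.takeUntil ℓ hℓmem with hts
    set d := q.dropUntil ℓ hℓmem with hds
    have ht : t.IsPath := hqp.takeUntil hℓmem
    have hd : d.IsPath := hqp.dropUntil hℓmem
    have hspec := q.take_spec hℓmem
    -- second vertex of d
    have hdpos : 0 < d.length := by
      rcases Nat.eq_zero_or_pos d.length with h | h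
      · exact absurd (Walk.eq_of_length_eq_zero h).symm hk'ℓ
      · exact h
    set b := d.getVert 1 with hb
    have hadjb : T.Adj ℓ b := by
      have := d.adj_getVert_succ hdpos
      rwa [d.getVert_zero] at this
    have hbd : b ∈ d.support :=
      Walk.mem_support_iff_exists_getVert.mpr ⟨1, rfl, by omega⟩
    -- second vertex of t.reverse
    have htpos : 0 < t.reverse.length := by
      rcases Nat.eq_zero_or_pos t.reverse.length with h | h
      · exact absurd (Walk.eq_of_length_eq_zero h).symm hjℓ
      · exact h
    set a := t.reverse.getVert 1 with ha
    have hadja : T.Adj ℓ a := by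
      have := t.reverse.adj_getVert_succ htpos
      rwa [t.reverse.getVert_zero] at this
    have hat : a ∈ t.support := by
      have : a ∈ t.reverse.support :=
        Walk.mem_support_iff_exists_getVert.mpr ⟨1, rfl, by omega⟩
      rwa [Walk.support_reverse, List.mem_reverse] at this
    -- memberships in s
    have hnodup := hqp.support_nodup
    rw [← hspec, Walk.support_append] at hnodup
    have has : a ∈ s := hqsupp a (by
      rw [← hspec, Walk.support_append]
      exact List.mem_append_left _ hat)
    have hbtail : b ∈ d.support.tail := by
      have hcons := Walk.support_eq_cons d
      have hbd' : b ∈ ℓ :: d.support.tail := hcons ▸ hbd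
      rcases List.mem_cons.mp hbd' with h | h
      · exact absurd h hadjb.ne'
      · exact h
    have hbs : b ∈ s := hqsupp b (by
      rw [← hspec, Walk.support_append]
      exact List.mem_append_right _ hbtail)
    have hae : a = m₀ := huniq a has hadja
    have hbe : b = m₀ := huniq b hbs hadjb
    have hdisj := (List.nodup_append'.mp hnodup).2.2
    exact hdisj hat (by rw [hae, ← hbe]; exact hbtail)
  refine ⟨q, fun l hl => Finset.mem_erase.mpr ⟨?_, hqsupp l hl⟩⟩
  intro h
  exact hns (h ▸ hl)

end Graph

end TLCAux



/-- Local consistency on a tree implies global consistency: if the cliques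
`C j ⊆ {0, ..., n-1}` of a CSP over binary variables are arranged in a junction tree `T`
(a tree on the clique index set satisfying the running intersection property: for every
variable `i`, the cliques containing `i` induce a connected subgraph), and the clique
beliefs are probability distributions agreeing on all separator marginals (adjacent
cliques have equal marginals on their intersection), then there is a global joint
distribution whose clique marginals equal the given beliefs; consequently the CSP induced
by the supports of the beliefs is not frustrated (some global assignment restricts to a
positive-belief configuration on every clique). -/
theorem tree_local_consistency_implies_global
    (n : ℕ) (ι : Type) [Fintype ι]
    (T : SimpleGraph ι) (htree : T.IsTree)
    (C : ι → Finset (Fin n))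
    (hri : ∀ i : Fin n, ∀ j k : ι, ∀ hj : i ∈ C j, ∀ hk : i ∈ C k,
      (T.induce {l : ι | i ∈ C l}).Reachable ⟨j, hj⟩ ⟨k, hk⟩)
    (b : ∀ j : ι, ({v // v ∈ C j} → Bool) → ℝ)
    (hnn : ∀ j : ι, ∀ u : {v // v ∈ C j} → Bool, 0 ≤ b j u)
    (hsum : ∀ j : ι, (∑ u : {v // v ∈ C j} → Bool, b j u) = 1)
    (hcons : ∀ j k : ι, T.Adj j k → ∀ x : Fin n → Bool,
      (∑ u ∈ Finset.univ.filter
          (fun u : {v // v ∈ C j} → Bool =>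
            ∀ i : {v // v ∈ C j}, i.val ∈ C k → u i = x i.val), b j u) =
      (∑ u ∈ Finset.univ.filter
          (fun u : {v // v ∈ C k} → Bool =>
            ∀ i : {v // v ∈ C k}, i.val ∈ C j → u i = x i.val), b k u)) :
    (∃ p : (Fin n → Bool) → ℝ,
        (∀ x, 0 ≤ p x) ∧ (∑ x, p x) = 1 ∧
        ∀ j : ι, ∀ u : {v // v ∈ C j} → Bool,
          (∑ x ∈ Finset.univ.filter
              (fun x : Fin n → Bool => ∀ i : {v // v ∈ C j}, x i.val = u i), p x)
            = b j u) ∧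
    (∃ x : Fin n → Bool, ∀ j : ι,
      0 < b j (fun i : {v // v ∈ C j} => x i.val)) := by
  classical
  open TLCAux in
  -- running intersection in walk form
  have hriW : ∀ i : Fin n, ∀ j k : ι, i ∈ C j → i ∈ C k →
      ∃ w : T.Walk j k, ∀ l ∈ w.support, i ∈ C l := by
    intro i j k hj hk
    obtain ⟨w⟩ := hri i j k hj hk
    refine ⟨w.map (SimpleGraph.Embedding.induce {l : ι | i ∈ C l}).toHom, ?_⟩
    intro l hl
    have hl : l ∈ (w.map (SimpleGraph.Embedding.induce {l : ι | i ∈ C l}).toHom).support := hl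
    rw [SimpleGraph.Walk.support_map] at hl
    obtain ⟨a, _, rfl⟩ := List.mem_map.mp hl
    exact a.2
  have hcommon : ∀ (j k : ι) (P1 P2 : ι → Prop) (w₁ w₂ : T.Walk j k),
      (∀ l ∈ w₁.support, P1 l) → (∀ l ∈ w₂.support, P2 l) →
      ∃ w : T.Walk j k, w.IsPath ∧ ∀ l ∈ w.support, P1 l ∧ P2 l := by
    intro j k P1 P2 w₁ w₂ h1 h2
    have heq : (w₁.toPath : T.Walk j k) = (w₂.toPath : T.Walk j k) :=
      TLCAux.path_eq htree.2 (w₁.toPath).2 (w₂.toPath).2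
    exact ⟨w₁.toPath, (w₁.toPath).2, fun l hl =>
      ⟨h1 l (w₁.support_toPath_subset hl), h2 l (w₂.support_toPath_subset (heq ▸ hl))⟩⟩
  have hconsX : ∀ j k : ι, T.Adj j k → ∀ x : Fin n → Bool,
      TLCAux.margb (C j) (b j) (C k) x = TLCAux.margb (C k) (b k) (C j) x := by
    intro j k h x
    exact hcons j k h x
  -- the inductive construction
  have key : ∀ m : ℕ, ∀ s : Finset ι, s.card ≤ m → s.Nonempty →
      (∀ j ∈ s, ∀ k ∈ s, ∃ w : T.Walk j k, ∀ l ∈ w.support, l ∈ s) →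
      ∃ p : (Fin n → Bool) → ℝ, (∀ x, 0 ≤ p x) ∧ (∑ x, p x) = 1 ∧
        TLCAux.DepOn (s.biUnion C) p ∧
        (∀ j ∈ s, ∀ x, TLCAux.marg (C j) p x = TLCAux.lift (C j) (b j) x) := by
    intro m
    induction m with
    | zero =>
      intro s hcard hne _
      have := Finset.card_pos.mpr hne
      omega
    | succ m ih =>
      intro s hcard hne hconn
      rcases eq_or_lt_of_le (Finset.one_le_card.mpr hne) with h1 | h2
      · -- singleton case
        obtain ⟨j, rfl⟩ := Finset.card_eq_one.mp h1.symm
        refine ⟨fun x => TLCAux.lift (C j) (b j) x / (2:ℝ) ^ (((C j)ᶜ).card), ?_, ?_, ?_, ?_⟩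
        · intro x
          exact div_nonneg (hnn j _) (by positivity)
        · rw [← Finset.sum_div]
          have hF : TLCAux.F (∅ : Finset (Fin n)) (fun _ => false) = Finset.univ := by
            ext y; simp [TLCAux.F]
          have h0 := TLCAux.sum_lift_F (c := C j) (g := b j) ∅ (fun _ => false)
          rw [hF] at h0
          have hm : TLCAux.margb (C j) (b j) ∅ (fun _ => false) = 1 := by
            rw [TLCAux.margb]
            rw [show Finset.univ.filter
              (fun u : {v // v ∈ C j} → Bool => ∀ i : {v // v ∈ C j}, i.1 ∈ (∅ : Finset (Fin n)) → u i = false) = Finset.univ by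
                ext u; simp]
            exact hsum j
          rw [h0, hm, Finset.union_empty, mul_one, div_self (by positivity)]
        · intro x y h
          rw [Finset.singleton_biUnion] at h
          dsimp only
          rw [TLCAux.depOn_lift h]
        · intro j' hj' x
          rw [Finset.mem_singleton] at hj'
          rw [hj']
          rw [TLCAux.marg, ← Finset.sum_div]
          rw [show (∑ y ∈ TLCAux.F (C j) x, TLCAux.lift (C j) (b j) y)
              = TLCAux.marg (C j) (TLCAux.lift (C j) (b j)) x from rfl]
          rw [TLCAux.marg_of_depOn TLCAux.depOn_lift x]
          field_simp
      · -- at least two cliques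
        obtain ⟨ℓ, hℓs, m₀, hm₀s, hadj, huniq, hconn'⟩ :=
          TLCAux.exists_leaf htree.2 s h2 hconn
        set s' := s.erase ℓ with hs'
        have hm₀' : m₀ ∈ s' := Finset.mem_erase.mpr ⟨hadj.ne', hm₀s⟩
        have hs'card : s'.card ≤ m := by
          rw [hs', Finset.card_erase_of_mem hℓs]; omega
        obtain ⟨p', hp'nn, hp'sum, hp'dep, hp'marg⟩ :=
          ih s' hs'card ⟨m₀, hm₀'⟩ hconn'
        set V' : Finset (Fin n) := s'.biUnion C with hV'
        have hCm₀V' : C m₀ ⊆ V' := Finset.subset_biUnion_of_mem C hm₀'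
        set sep : (Fin n → Bool) → ℝ := fun x => TLCAux.margb (C m₀) (b m₀) (C ℓ) x
          with hsepdef
        have hsep_nn : ∀ x, 0 ≤ sep x := fun x => TLCAux.margb_nonneg (hnn m₀) _ _
        -- separator property from running intersection
        have hsep : ∀ i ∈ C ℓ, ∀ k ∈ s', i ∈ C k → i ∈ C m₀ := by
          intro i hiℓ k hk hik
          have hkℓ : k ≠ ℓ := (Finset.mem_erase.mp hk).1
          obtain ⟨w₁, hw₁⟩ := hriW i ℓ k hiℓ hik
          obtain ⟨w₂, hw₂⟩ := hconn ℓ hℓs k (Finset.mem_of_mem_erase hk)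
          obtain ⟨w, hwp, hwsupp⟩ := hcommon ℓ k _ _ w₁ w₂ hw₁ hw₂
          have hpos : 0 < w.length := by
            rcases Nat.eq_zero_or_pos w.length with h | h
            · exact absurd (SimpleGraph.Walk.eq_of_length_eq_zero (p := w) h).symm hkℓ
            · exact h
          have hadjv : T.Adj ℓ (w.getVert 1) := by
            have := w.adj_getVert_succ hpos
            rwa [w.getVert_zero] at this
          have hvsupp : w.getVert 1 ∈ w.support :=
            SimpleGraph.Walk.mem_support_iff_exists_getVert.mpr ⟨1, rfl, by omega⟩
          have hv := hwsupp _ hvsupp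
          have : w.getVert 1 = m₀ := huniq _ hv.2 hadjv
          rw [← this]
          exact hv.1
        have hsepset : ∀ i ∈ C ℓ, (i ∈ V' ↔ i ∈ C m₀) := by
          intro i hi
          constructor
          · intro h
            obtain ⟨k, hk, hik⟩ := Finset.mem_biUnion.mp h
            exact hsep i hi k hk hik
          · intro h
            exact hCm₀V' h
        have hsepdepV' : ∀ x y : Fin n → Bool, (∀ i ∈ V', y i = x i) → sep y = sep x := by
          intro x y h
          exact TLCAux.margb_congr (fun i _ => Iff.rfl) (fun i hi _ => h i (hCm₀V' hi))
        have hsepdepCℓ : ∀ x y : Fin n → Bool, (∀ i ∈ C ℓ, y i = x i) → sep y = sep x := by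
          intro x y h
          exact TLCAux.margb_congr (fun i _ => Iff.rfl) (fun i _ hi => h i hi)
        -- marginal of p' on the separator equals sep
        have hsepmarg : ∀ x, TLCAux.marg (C ℓ ∩ C m₀) p' x = sep x := by
          intro x
          have ht := TLCAux.tower (Finset.inter_subset_right (s₁ := C ℓ) (s₂ := C m₀)) p' x
          rw [Finset.sum_congr rfl (fun y hy => hp'marg m₀ hm₀' y)] at ht
          rw [show (∑ y ∈ TLCAux.F (C ℓ ∩ C m₀) x, TLCAux.lift (C m₀) (b m₀) y)
              = (2:ℝ) ^ (((C m₀ ∪ (C ℓ ∩ C m₀))ᶜ).card)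
                * TLCAux.margb (C m₀) (b m₀) (C ℓ ∩ C m₀) x from TLCAux.sum_lift_F _ _] at ht
          rw [Finset.union_eq_left.mpr Finset.inter_subset_right] at ht
          have hmb : TLCAux.margb (C m₀) (b m₀) (C ℓ ∩ C m₀) x
              = TLCAux.margb (C m₀) (b m₀) (C ℓ) x := by
            refine TLCAux.margb_congr (fun i hi => ?_) (fun _ _ _ => rfl)
            rw [Finset.mem_inter]
            exact ⟨fun h => h.1, fun h => ⟨h, hi⟩⟩
          rw [hmb] at ht
          have h2ne : ((2:ℝ) ^ (((C m₀)ᶜ).card)) ≠ 0 := by positivity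
          exact mul_left_cancel₀ h2ne ht
        have hV : s.biUnion C = C ℓ ∪ V' := by
          rw [hV', hs', ← Finset.biUnion_insert, Finset.insert_erase hℓs]
        set d : ℕ := (C ℓ \ V').card with hd
        set p : (Fin n → Bool) → ℝ := fun x =>
          if sep x = 0 then 0
          else p' x * TLCAux.lift (C ℓ) (b ℓ) x * (2:ℝ) ^ d / sep x with hp
        have hpnn : ∀ x, 0 ≤ p x := by
          intro x
          rw [hp]
          dsimp only
          split
          · exact le_refl 0
          · exact div_nonneg (by
              have := hp'nn x
              have := hnn ℓ (fun i : {v // v ∈ C ℓ} => x i.1)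
              positivity) (hsep_nn x)
        have hp'0 : ∀ x, sep x = 0 → p' x = 0 := by
          intro x h0
          have h1 : TLCAux.marg (C ℓ ∩ C m₀) p' x = 0 := by rw [hsepmarg]; exact h0
          have h2 : p' x ≤ TLCAux.marg (C ℓ ∩ C m₀) p' x :=
            Finset.single_le_sum (fun y _ => hp'nn y) TLCAux.self_mem_F
          have := hp'nn x
          linarith
        have hmargbV' : ∀ x, TLCAux.margb (C ℓ) (b ℓ) V' x = sep x := by
          intro x
          rw [TLCAux.margb_congr hsepset (fun _ _ _ => rfl)]
          exact hconsX ℓ m₀ hadj x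
        have hde : (((C ℓ ∪ V')ᶜ).card) + d = ((V'ᶜ).card) := by
          have h1 := TLCAux.card_compl_add (Finset.subset_union_right (s₁ := C ℓ) (s₂ := V'))
          rwa [Finset.union_sdiff_right] at h1
        have hKC : ∀ x, TLCAux.marg V' p x = (2:ℝ) ^ ((V'ᶜ).card) * p' x := by
          intro x
          by_cases h0 : sep x = 0
          · have hz : ∀ y ∈ TLCAux.F V' x, p y = 0 := by
              intro y hy
              have h1 : sep y = 0 := by
                rw [hsepdepV' x y (TLCAux.mem_F.mp hy)]; exact h0
              rw [hp]; dsimp only; rw [if_pos h1]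
            rw [TLCAux.marg, Finset.sum_eq_zero hz, hp'0 x h0, mul_zero]
          · have hterm : ∀ y ∈ TLCAux.F V' x, p y
                = (p' x * (2:ℝ) ^ d / sep x) * TLCAux.lift (C ℓ) (b ℓ) y := by
              intro y hy
              have hys : sep y = sep x := hsepdepV' x y (TLCAux.mem_F.mp hy)
              have hyp : p' y = p' x := hp'dep (TLCAux.mem_F.mp hy)
              rw [hp]; dsimp only; rw [hys, if_neg h0, hyp]
              ring
            rw [TLCAux.marg, Finset.sum_congr rfl hterm, ← Finset.mul_sum,
              TLCAux.sum_lift_F V' x, hmargbV' x]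
            rw [← hde, pow_add]
            field_simp
        have hpdep : TLCAux.DepOn (s.biUnion C) p := by
          rw [hV]
          intro x y h
          have hyV' : ∀ i ∈ V', y i = x i := fun i hi =>
            h i (Finset.mem_union_right _ hi)
          have hyCℓ : ∀ i ∈ C ℓ, y i = x i := fun i hi =>
            h i (Finset.mem_union_left _ hi)
          rw [hp]; dsimp only
          rw [hsepdepCℓ x y hyCℓ, hp'dep hyV', TLCAux.depOn_lift hyCℓ]
        have h2V' : ((2:ℝ) ^ ((V'ᶜ).card)) ≠ 0 := by positivity
        have hpsum : (∑ x, p x) = 1 := by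
          have h1 := TLCAux.sum_marg V' p
          rw [Finset.sum_congr rfl (fun x _ => hKC x), ← Finset.mul_sum, hp'sum, mul_one] at h1
          exact mul_left_cancel₀ h2V' (by rw [mul_one]; exact h1.symm)
        refine ⟨p, hpnn, hpsum, hpdep, ?_⟩
        intro j hj x
        by_cases hjℓ : j = ℓ
        · subst hjℓ
          by_cases h0 : sep x = 0
          · have hz : ∀ y ∈ TLCAux.F (C j) x, p y = 0 := by
              intro y hy
              have h1 : sep y = 0 := by
                rw [hsepdepCℓ x y (TLCAux.mem_F.mp hy)]; exact h0
              rw [hp]; dsimp only; rw [if_pos h1]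
            rw [TLCAux.marg, Finset.sum_eq_zero hz]
            have hle : TLCAux.lift (C j) (b j) x ≤ sep x := by
              have h := TLCAux.lift_le_margb (g := b j) (hnn j) (C m₀) x
              rw [hconsX j m₀ hadj x] at h
              exact h
            have hge : 0 ≤ TLCAux.lift (C j) (b j) x := hnn j _
            rw [h0] at hle
            linarith
          · have hterm : ∀ y ∈ TLCAux.F (C j) x, p y
                = (TLCAux.lift (C j) (b j) x * (2:ℝ) ^ d / sep x) * p' y := by
              intro y hy
              have hys : sep y = sep x := hsepdepCℓ x y (TLCAux.mem_F.mp hy)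
              have hyl : TLCAux.lift (C j) (b j) y = TLCAux.lift (C j) (b j) x :=
                TLCAux.depOn_lift (TLCAux.mem_F.mp hy)
              rw [hp]; dsimp only; rw [hys, if_neg h0, hyl]
              ring
            rw [TLCAux.marg, Finset.sum_congr rfl hterm, ← Finset.mul_sum]
            rw [show (∑ y ∈ TLCAux.F (C j) x, p' y) = TLCAux.marg (C j) p' x from rfl]
            -- compute marg (C j) p' x
            have hint : C j ∩ V' = C j ∩ C m₀ := by
              ext i
              rw [Finset.mem_inter, Finset.mem_inter]
              exact ⟨fun h => ⟨h.1, (hsepset i h.1).mp h.2⟩,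
                fun h => ⟨h.1, (hsepset i h.1).mpr h.2⟩⟩
            have hmi := TLCAux.marg_inter_of_depOn hp'dep (C j) x
            rw [hint, hsepmarg x] at hmi
            have hcc : (((C j ∩ C m₀)ᶜ).card) = (((C j)ᶜ).card) + d := by
              have h1 := TLCAux.card_compl_add
                (Finset.inter_subset_left (s₁ := C j) (s₂ := C m₀))
              have h2 : C j \ (C j ∩ C m₀) = C j \ V' := by
                ext i
                rw [Finset.mem_sdiff, Finset.mem_sdiff, Finset.mem_inter]
                constructor
                · rintro ⟨hi, hni⟩
                  exact ⟨hi, fun hv => hni ⟨hi, (hsepset i hi).mp hv⟩⟩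
                · rintro ⟨hi, hni⟩
                  exact ⟨hi, fun hv => hni ((hsepset i hi).mpr hv.2)⟩
              rw [h2] at h1
              omega
            rw [hcc, pow_add] at hmi
            -- hmi : 2^(Cjᶜ) * sep x = 2^(Cjᶜ) * 2^d * marg (C j) p' x
            have h2c : ((2:ℝ) ^ (((C j)ᶜ).card)) ≠ 0 := by positivity
            have hmarg' : (2:ℝ) ^ d * TLCAux.marg (C j) p' x = sep x :=
              mul_left_cancel₀ h2c (by rw [← mul_assoc]; linarith [hmi])
            have hsep' : sep x = 2 ^ d * TLCAux.marg (C j) p' x := hmarg'.symm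
            have hm0 : TLCAux.marg (C j) p' x ≠ 0 := by
              intro hzz
              rw [hzz, mul_zero] at hsep'
              exact h0 hsep'
            rw [hsep']
            field_simp [hm0]
        · have hj' : j ∈ s' := Finset.mem_erase.mpr ⟨hjℓ, hj⟩
          have hCjV' : C j ⊆ V' := Finset.subset_biUnion_of_mem C hj'
          have ht := TLCAux.tower hCjV' p x
          rw [Finset.sum_congr rfl (fun y _ => hKC y), ← Finset.mul_sum] at ht
          rw [show (∑ y ∈ TLCAux.F (C j) x, p' y) = TLCAux.marg (C j) p' x from rfl] at ht
          rw [hp'marg j hj' x] at ht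
          exact mul_left_cancel₀ h2V' ht
  -- apply to the full clique set
  have hne : (Finset.univ : Finset ι).Nonempty := by
    have : Nonempty ι := htree.1.nonempty
    exact Finset.univ_nonempty
  have hconnU : ∀ j ∈ (Finset.univ : Finset ι), ∀ k ∈ (Finset.univ : Finset ι),
      ∃ w : T.Walk j k, ∀ l ∈ w.support, l ∈ (Finset.univ : Finset ι) := by
    intro j _ k _
    obtain ⟨w⟩ := htree.1.preconnected j k
    exact ⟨w, fun l _ => Finset.mem_univ l⟩
  obtain ⟨p, hpnn, hpsum, hpdep, hpmarg⟩ :=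
    key (Finset.univ.card) Finset.univ le_rfl hne hconnU
  constructor
  · refine ⟨p, hpnn, hpsum, ?_⟩
    intro j u
    set x₀ : Fin n → Bool := fun i => if h : i ∈ C j then u ⟨i, h⟩ else false with hx₀
    have hset : Finset.univ.filter
        (fun x : Fin n → Bool => ∀ i : {v // v ∈ C j}, x i.val = u i)
        = TLCAux.F (C j) x₀ := by
      ext y
      rw [Finset.mem_filter, TLCAux.mem_F]
      constructor
      · rintro ⟨_, h⟩ i hi
        rw [hx₀]; dsimp only; rw [dif_pos hi]
        exact h ⟨i, hi⟩
      · intro h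
        refine ⟨Finset.mem_univ _, fun i => ?_⟩
        have := h i.1 i.2
        rw [hx₀] at this; dsimp only at this; rw [dif_pos i.2] at this
        rw [this]
    rw [hset]
    rw [show (∑ x ∈ TLCAux.F (C j) x₀, p x) = TLCAux.marg (C j) p x₀ from rfl]
    rw [hpmarg j (Finset.mem_univ j) x₀]
    rw [TLCAux.lift]
    congr 1
    funext i
    rw [hx₀]; dsimp only; rw [dif_pos i.2]
  · have hex : ∃ x, 0 < p x := by
      by_contra h
      push_neg at h
      have hz : ∀ x : Fin n → Bool, p x = 0 := fun x => le_antisymm (h x) (hpnn x)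
      rw [Finset.sum_congr rfl (fun x _ => hz x), Finset.sum_const, smul_zero] at hpsum
      norm_num at hpsum
    obtain ⟨x, hx⟩ := hex
    refine ⟨x, fun j => ?_⟩
    have h1 : p x ≤ TLCAux.marg (C j) p x :=
      Finset.single_le_sum (fun y _ => hpnn y) TLCAux.self_mem_F
    rw [hpmarg j (Finset.mem_univ j) x] at h1
    exact lt_of_lt_of_le hx h1
end

section
/- ML certificate property: if the optimal solution of the LP decoder is integral, i.e., there is a vector x* ∈ {0,1}^n with b_i(x*_i) = 1 for all i and all check-node beliefs integral and consistent, then x* is a codeword and x* minimizes the linear cost ∑_i l_i x_i over all codewords (that is, x* is a maximum likelihood codeword). -/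
/-- `x ∈ {0,1}ⁿ` is a codeword iff every parity check `c` has an even number of ones. -/
def Codeword (n : ℕ) (checks : Finset (Finset (Fin n))) (x : Fin n → Bool) : Prop :=
  ∀ c ∈ checks, Even ((c.filter fun i => x i = true).card)

/-- Feasibility for the basic LP decoder: singleton beliefs `bi` are normalized and in
`[0,1]`; each check belief `bc c` is in `[0,1]`, vanishes on odd-weight (non local
codeword) configurations, and marginalizes consistently to the singleton beliefs. -/
def LPFeasible (n : ℕ) (checks : Finset (Finset (Fin n)))
    (bi : Fin n → Bool → ℝ)
    (bc : (c : Finset (Fin n)) → ({i // i ∈ c} → Bool) → ℝ) : Prop :=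
  (∀ i, bi i false + bi i true = 1) ∧
  (∀ i v, 0 ≤ bi i v) ∧ (∀ i v, bi i v ≤ 1) ∧
  (∀ c ∈ checks, ∀ u, 0 ≤ bc c u) ∧ (∀ c ∈ checks, ∀ u, bc c u ≤ 1) ∧
  (∀ c ∈ checks, ∀ u : {i // i ∈ c} → Bool,
    ¬ Even ((Finset.univ.filter fun i : {i // i ∈ c} => u i = true).card) → bc c u = 0) ∧
  (∀ c ∈ checks, ∀ i : Fin n, ∀ hi : i ∈ c, ∀ v : Bool,
    bi i v =
      ∑ u ∈ Finset.univ.filter (fun u : {j // j ∈ c} → Bool => u ⟨i, hi⟩ = v), bc c u)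

/-- LP decoding objective `∑_i ∑_{x_i} l_i x_i b_i(x_i) = ∑_i l_i b_i(1)`. -/
def LPObjective (n : ℕ) (l : Fin n → ℝ) (bi : Fin n → Bool → ℝ) : ℝ :=
  ∑ i, l i * bi i true

/-- Linear cost `∑_i l_i x_i` of a binary word. -/
def wordCost (n : ℕ) (l : Fin n → ℝ) (x : Fin n → Bool) : ℝ :=
  ∑ i, l i * (if x i then 1 else 0)

lemma card_filter_subtype {n : ℕ} (c : Finset (Fin n)) (x : Fin n → Bool) :
    (Finset.univ.filter fun i : {i // i ∈ c} => x i.val = true).card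
      = (c.filter fun i => x i = true).card := by
  apply Finset.card_bij (fun a _ => a.1)
  · intro a ha; simp only [Finset.mem_filter, Finset.mem_univ, true_and] at ha
    simp [a.2, ha]
  · intro a _ b _ h; exact Subtype.ext h
  · intro b hb; simp only [Finset.mem_filter] at hb
    exact ⟨⟨b, hb.1⟩, by simp [hb.2], rfl⟩

lemma integral_point_feasible {n : ℕ} (checks : Finset (Finset (Fin n)))
    (y : Fin n → Bool) (hy : ∀ c ∈ checks, Even ((c.filter fun i => y i = true).card)) :
    LPFeasible n checks (fun i v => if y i = v then 1 else 0)
      (fun c u => if u = (fun j => y j.val) then 1 else 0) := by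
  refine ⟨fun i => by cases h : y i <;> simp [h],
    fun i v => by positivity,
    fun i v => by dsimp only; split <;> norm_num,
    fun c _ u => by positivity,
    fun c _ u => by dsimp only; split <;> norm_num,
    ?_, ?_⟩
  · intro c hc u hu
    by_cases h : u = (fun j => y j.val)
    · exfalso; apply hu; rw [h, card_filter_subtype]; exact hy c hc
    · simp [h]
  · intro c hc i hi v
    dsimp only
    rw [Finset.sum_ite_eq' _ (fun j : {j // j ∈ c} => y j.val) (fun _ => (1:ℝ))]
    simp [Finset.mem_filter, eq_comm]
/-- ML certificate property: if an optimal solution of the LP decoder is integral, i.e.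
there is `x* ∈ {0,1}ⁿ` with `b_i(x*_i) = 1` for all `i` and all check-node beliefs
integral (and the whole point feasible, hence consistent), then `x*` is a codeword and it
minimizes the linear cost `∑ l_i x_i` over all codewords, i.e. `x*` is an ML codeword. -/
theorem ml_certificate (n : ℕ) (checks : Finset (Finset (Fin n))) (l : Fin n → ℝ)
    (bi : Fin n → Bool → ℝ)
    (bc : (c : Finset (Fin n)) → ({i // i ∈ c} → Bool) → ℝ)
    (hfeas : LPFeasible n checks bi bc)
    (hopt : ∀ bi' bc', LPFeasible n checks bi' bc' →
      LPObjective n l bi ≤ LPObjective n l bi')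
    (x : Fin n → Bool)
    (hxint : ∀ i, bi i (x i) = 1)
    (hcint : ∀ c ∈ checks, ∀ u, bc c u = 0 ∨ bc c u = 1) :
    Codeword n checks x ∧
      ∀ y : Fin n → Bool, Codeword n checks y → wordCost n l x ≤ wordCost n l y := by
  obtain ⟨hnorm, hnn, hle1, hbcnn, hbcle1, heven, hmarg⟩ := hfeas
  have hzero : ∀ i, bi i (!(x i)) = 0 := by
    intro i
    have h1 := hnorm i
    have h2 := hxint i
    cases h : x i <;> rw [h] at h2 <;>
      simp only [Bool.not_false, Bool.not_true] <;> linarith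
  have hagree : ∀ c, c ∈ checks → ∀ u : {j // j ∈ c} → Bool, bc c u ≠ 0 →
      ∀ i, ∀ hi : i ∈ c, u ⟨i, hi⟩ = x i := by
    intro c hc u hu i hi
    by_contra h
    have hne : u ⟨i, hi⟩ = !(x i) := by
      cases hx : x i <;> cases hu2 : u ⟨i, hi⟩ <;> simp_all
    have hsum := hmarg c hc i hi (!(x i))
    rw [hzero i] at hsum
    exact hu (Finset.sum_eq_zero_iff_of_nonneg (fun v _ => hbcnn c hc v) |>.mp
      hsum.symm u (by simp [hne]))
  have hcw : Codeword n checks x := by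
    intro c hc
    rcases Finset.eq_empty_or_nonempty c with rfl | ⟨i0, hi0⟩
    · simp
    · have hsum := hmarg c hc i0 hi0 (x i0)
      rw [hxint i0] at hsum
      have hex : ∃ u ∈ Finset.univ.filter
          (fun u : {j // j ∈ c} → Bool => u ⟨i0, hi0⟩ = x i0), bc c u ≠ 0 := by
        by_contra h
        push_neg at h
        have h0 : (∑ u ∈ Finset.univ.filter
            (fun u : {j // j ∈ c} → Bool => u ⟨i0, hi0⟩ = x i0), bc c u) = 0 :=
          Finset.sum_eq_zero h
        rw [← hsum] at h0; norm_num at h0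
      obtain ⟨u, _, hu⟩ := hex
      have heq : u = fun j : {j // j ∈ c} => x j.val :=
        funext fun j => hagree c hc u hu j.val j.2
      have hev : Even ((Finset.univ.filter
          fun i : {i // i ∈ c} => u i = true).card) := by
        by_contra hodd; exact hu (heven c hc u hodd)
      rw [heq] at hev
      rwa [card_filter_subtype c x] at hev
  refine ⟨hcw, fun y hy => ?_⟩
  have hfeas' := integral_point_feasible checks y hy
  have hle := hopt _ _ hfeas'
  have hx1 : ∀ i, bi i true = if x i then 1 else 0 := by
    intro i
    cases h : x i
    · have := hzero i; rw [h] at this; simpa using this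
    · have := hxint i; rw [h] at this; simpa using this
  have e1 : LPObjective n l bi = wordCost n l x := by
    unfold LPObjective wordCost
    exact Finset.sum_congr rfl fun i _ => by rw [hx1 i]
  have e2 : LPObjective n l (fun i v => if y i = v then 1 else 0) = wordCost n l y := by
    unfold LPObjective wordCost
    refine Finset.sum_congr rfl fun i _ => ?_
    cases h : y i <;> simp [h]
  rw [e1, e2] at hle
  exact hle
end
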